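/- The real algebraic surface X = {(x,y,z) ∈ ℝ³ : x² + y² = z³} is Lipschitz regular at infinity: there exist a compact set K ⊆ ℝ³ and a compact set K' ⊆ ℝ² and a bi-Lipschitz homeomorphism X \ K → ℝ² \ K'. In particular, Lipschitz regularity at infinity of a real algebraic set does not imply it is an affine subspace. -/

import Mathlib

open Set Filter Metric

lemma aux_cube_sq (u v : ℝ) (hu : 1 ≤ u) (hv : 1 ≤ v) : |u^2 - v^2| ≤ |u^3 - v^3| := by
  have key : ∀ a b : ℝ, 1 ≤ a → 1 ≤ b → a ≤ b → b^2 - a^2 ≤ b^3 - a^3 := by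
    intro a b ha hb h
    nlinarith [mul_nonneg (sub_nonneg.2 h) (mul_nonneg (le_trans zero_le_one hb) (sub_nonneg.2 hb)),
      mul_nonneg (sub_nonneg.2 h) (mul_nonneg (le_trans zero_le_one ha) (sub_nonneg.2 ha)),
      mul_nonneg (sub_nonneg.2 h) (mul_nonneg (le_trans zero_le_one ha) (le_trans zero_le_one hb))]
  rcases le_total u v with h | h
  · rw [abs_sub_comm, abs_sub_comm (u^3)]
    rw [abs_of_nonneg (by nlinarith [key u v hu hv h]), abs_of_nonneg (by nlinarith [key u v hu hv h])]
    exact key u v hu hv h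
  · rw [abs_of_nonneg (by nlinarith [key v u hv hu h]), abs_of_nonneg (by nlinarith [key v u hv hu h])]
    exact key v u hv hu h

/-- The real algebraic surface `x² + y² = z³` in `ℝ³` is Lipschitz regular at infinity:
outside compact sets it is bi-Lipschitz homeomorphic to the complement of a compact
subset of `ℝ²`. (In particular, Lipschitz regularity at infinity of a real algebraic
set does not force it to be an affine subspace.) -/
theorem cusp_surface_lipschitz_regular_at_infinity :
    ∃ (K : Set (EuclideanSpace ℝ (Fin 3))) (K' : Set (EuclideanSpace ℝ (Fin 2)))
      (φ : EuclideanSpace ℝ (Fin 3) → EuclideanSpace ℝ (Fin 2)),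
      IsCompact K ∧ IsCompact K' ∧
      Set.BijOn φ ({p : EuclideanSpace ℝ (Fin 3) | p 0 ^ 2 + p 1 ^ 2 = p 2 ^ 3} \ K)
        (Set.univ \ K') ∧
      ∃ l₁ l₂ : ℝ, 0 < l₁ ∧
        ∀ p ∈ ({p : EuclideanSpace ℝ (Fin 3) | p 0 ^ 2 + p 1 ^ 2 = p 2 ^ 3} \ K),
        ∀ q ∈ ({p : EuclideanSpace ℝ (Fin 3) | p 0 ^ 2 + p 1 ^ 2 = p 2 ^ 3} \ K),
          l₁ * ‖p - q‖ ≤ ‖φ p - φ q‖ ∧ ‖φ p - φ q‖ ≤ l₂ * ‖p - q‖ := by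
  have hodd : Odd 3 := ⟨1, by norm_num⟩
  have hcubeinj : ∀ a b : ℝ, a ^ 3 = b ^ 3 → a = b := by
    intro a b h
    have hm : StrictMono fun a : ℝ => a ^ 3 := Odd.strictMono_pow hodd
    exact hm.injective h
  set X : Set (EuclideanSpace ℝ (Fin 3)) :=
    {p : EuclideanSpace ℝ (Fin 3) | p 0 ^ 2 + p 1 ^ 2 = p 2 ^ 3} with hXdef
  set φ : EuclideanSpace ℝ (Fin 3) → EuclideanSpace ℝ (Fin 2) :=
    fun p => (WithLp.equiv 2 (Fin 2 → ℝ)).symm ![p 0, p 1] with hφdef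
  set K : Set (EuclideanSpace ℝ (Fin 3)) := Metric.closedBall 0 2 with hKdef
  have hφc : Continuous φ := by
    refine (PiLp.continuous_toLp 2 fun _ : Fin 2 => ℝ).comp (continuous_pi fun i => ?_)
    fin_cases i
    · exact ((continuous_apply 0).comp (PiLp.continuous_ofLp 2 fun _ : Fin 3 => ℝ) :
        Continuous fun a : EuclideanSpace ℝ (Fin 3) => a 0)
    · exact ((continuous_apply 1).comp (PiLp.continuous_ofLp 2 fun _ : Fin 3 => ℝ) :
        Continuous fun a : EuclideanSpace ℝ (Fin 3) => a 1)
  have hXclosed : IsClosed X := by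
    refine isClosed_eq (Continuous.add ?_ ?_) ?_
    · exact ((continuous_apply 0).comp (PiLp.continuous_ofLp 2 _)).pow 2
    · exact ((continuous_apply 1).comp (PiLp.continuous_ofLp 2 _)).pow 2
    · exact ((continuous_apply 2).comp (PiLp.continuous_ofLp 2 _)).pow 3
  have hKcomp : IsCompact K := isCompact_closedBall 0 2
  have hnorm2 : ∀ a : EuclideanSpace ℝ (Fin 2), ‖a‖ = Real.sqrt (a 0 ^ 2 + a 1 ^ 2) := by
    intro a
    rw [EuclideanSpace.norm_eq, Fin.sum_univ_two, Real.norm_eq_abs, Real.norm_eq_abs,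
      sq_abs, sq_abs]
  have hnorm3 : ∀ a : EuclideanSpace ℝ (Fin 3),
      ‖a‖ = Real.sqrt (a 0 ^ 2 + a 1 ^ 2 + a 2 ^ 2) := by
    intro a
    simp only [EuclideanSpace.norm_eq, Fin.sum_univ_three, Real.norm_eq_abs, sq_abs]
  -- points of X outside K have z-coordinate ≥ 1
  have hz1 : ∀ p ∈ X \ K, (1 : ℝ) ≤ p 2 := by
    rintro p ⟨hpX, hpK⟩
    have hz0 : 0 ≤ p 2 := by
      refine hodd.pow_nonneg_iff.mp ?_
      rw [← hpX]; positivity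
    have hnp : 2 < ‖p‖ := by
      simpa [hKdef, Metric.mem_closedBall, dist_zero_right] using hpK
    have hsq : 4 < p 0 ^ 2 + p 1 ^ 2 + p 2 ^ 2 := by
      have h1 : (2:ℝ)^2 < ‖p‖^2 := by nlinarith [norm_nonneg p]
      have h2 : ‖p‖^2 = p 0 ^ 2 + p 1 ^ 2 + p 2 ^ 2 := by
        rw [hnorm3 p, Real.sq_sqrt (by positivity)]
      nlinarith
    have hpX' : p 0 ^ 2 + p 1 ^ 2 = p 2 ^ 3 := hpX
    have : 4 < p 2 ^ 3 + p 2 ^ 2 := by linarith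
    nlinarith
  -- injectivity of φ on X
  have hinj : Set.InjOn φ X := by
    intro p hp q hq h
    have h0 : p 0 = q 0 := congrFun (congrArg WithLp.ofLp h) 0
    have h1 : p 1 = q 1 := congrFun (congrArg WithLp.ofLp h) 1
    have h2 : p 2 = q 2 := by
      refine hcubeinj _ _ ?_
      rw [← hp, ← hq, h0, h1]
    ext i
    fin_cases i <;> assumption
  refine ⟨K, φ '' (X ∩ K), φ, hKcomp, (hKcomp.inter_left hXclosed).image hφc, ?_, ?_⟩
  · refine ⟨?_, hinj.mono diff_subset, ?_⟩
    · rintro p ⟨hpX, hpK⟩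
      refine ⟨trivial, ?_⟩
      rintro ⟨q, ⟨hqX, hqK⟩, hφq⟩
      exact hpK (hinj hqX hpX hφq ▸ hqK)
    · rintro v ⟨-, hvK'⟩
      set s : ℝ := v 0 ^ 2 + v 1 ^ 2 with hsdef
      have hs : 0 ≤ s := by positivity
      set z : ℝ := s ^ ((1:ℝ)/3) with hzdef
      have hz3 : z ^ 3 = s := by
        rw [hzdef, ← Real.rpow_natCast (s ^ ((1:ℝ)/3)) 3, ← Real.rpow_mul hs]
        norm_num
      set p : EuclideanSpace ℝ (Fin 3) := (WithLp.equiv 2 (Fin 3 → ℝ)).symm ![v 0, v 1, z]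
        with hpdef
      have hpX : p ∈ X := by
        show p 0 ^ 2 + p 1 ^ 2 = p 2 ^ 3
        show v 0 ^ 2 + v 1 ^ 2 = z ^ 3
        rw [hz3]
      have hφp : φ p = v := by
        ext i
        fin_cases i <;> rfl
      have hpK : p ∉ K := by
        intro hpK
        exact hvK' ⟨p, ⟨hpX, hpK⟩, hφp⟩
      exact ⟨p, ⟨hpX, hpK⟩, hφp⟩
  · refine ⟨(Real.sqrt 2)⁻¹, 1, by positivity, ?_⟩
    intro p hp q hq
    have hzp := hz1 p hp
    have hzq := hz1 q hq
    have e0 : (φ p - φ q) 0 = p 0 - q 0 := rfl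
    have e1 : (φ p - φ q) 1 = p 1 - q 1 := rfl
    have f0 : (p - q) 0 = p 0 - q 0 := rfl
    have f1 : (p - q) 1 = p 1 - q 1 := rfl
    have f2 : (p - q) 2 = p 2 - q 2 := rfl
    have hd : ‖φ p - φ q‖ = Real.sqrt ((p 0 - q 0)^2 + (p 1 - q 1)^2) := by
      rw [hnorm2, e0, e1]
    have hD : ‖p - q‖ = Real.sqrt ((p 0 - q 0)^2 + (p 1 - q 1)^2 + (p 2 - q 2)^2) := by
      rw [hnorm3, f0, f1, f2]
    -- |Δz| ≤ ‖φ p - φ q‖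
    have hzd : |p 2 - q 2| ≤ ‖φ p - φ q‖ := by
      set u : ℝ := Real.sqrt (p 2) with hudef
      set w : ℝ := Real.sqrt (q 2) with hwdef
      have hu1 : 1 ≤ u := by
        rw [hudef, show (1:ℝ) = Real.sqrt 1 from (Real.sqrt_one).symm]
        exact Real.sqrt_le_sqrt hzp
      have hw1 : 1 ≤ w := by
        rw [hwdef, show (1:ℝ) = Real.sqrt 1 from (Real.sqrt_one).symm]
        exact Real.sqrt_le_sqrt hzq
      have hu2 : u ^ 2 = p 2 := Real.sq_sqrt (by linarith)
      have hw2 : w ^ 2 = q 2 := Real.sq_sqrt (by linarith)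
      have hup : ‖φ p‖ = u ^ 3 := by
        have h1 : (φ p) 0 = p 0 := rfl
        have h2 : (φ p) 1 = p 1 := rfl
        rw [hnorm2, h1, h2, hp.1, ← hu2, show ((u^2)^3 : ℝ) = (u^3)^2 by ring,
          Real.sqrt_sq (by positivity)]
      have hwq : ‖φ q‖ = w ^ 3 := by
        have h1 : (φ q) 0 = q 0 := rfl
        have h2 : (φ q) 1 = q 1 := rfl
        rw [hnorm2, h1, h2, hq.1, ← hw2, show ((w^2)^3 : ℝ) = (w^3)^2 by ring,
          Real.sqrt_sq (by positivity)]
      calc |p 2 - q 2| = |u^2 - w^2| := by rw [hu2, hw2]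
        _ ≤ |u^3 - w^3| := aux_cube_sq u w hu1 hw1
        _ = |‖φ p‖ - ‖φ q‖| := by rw [hup, hwq]
        _ ≤ ‖φ p - φ q‖ := abs_norm_sub_norm_le _ _
    constructor
    · -- lower bound
      rw [inv_mul_le_iff₀ (by positivity : (0:ℝ) < Real.sqrt 2)]
      have hsq : (p 2 - q 2)^2 ≤ (p 0 - q 0)^2 + (p 1 - q 1)^2 := by
        have h1 : |p 2 - q 2|^2 ≤ ‖φ p - φ q‖^2 := by
          have := abs_nonneg (p 2 - q 2)
          nlinarith
        rw [sq_abs, hd, Real.sq_sqrt (by positivity)] at h1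
        exact h1
      rw [hd, hD]
      calc Real.sqrt ((p 0 - q 0)^2 + (p 1 - q 1)^2 + (p 2 - q 2)^2)
          ≤ Real.sqrt (2 * ((p 0 - q 0)^2 + (p 1 - q 1)^2)) :=
            Real.sqrt_le_sqrt (by linarith)
        _ = Real.sqrt 2 * Real.sqrt ((p 0 - q 0)^2 + (p 1 - q 1)^2) :=
            Real.sqrt_mul (by norm_num) _
    · -- upper bound
      rw [one_mul, hd, hD]
      exact Real.sqrt_le_sqrt (by nlinarith [sq_nonneg (p 2 - q 2)])
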